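/- If R is a GNC ring, then Nil(R) + J(R) = Nil(R); that is, the sum of a nilpotent element and an element of the Jacobson radical is nilpotent. -/

import Mathlib

/-- An element is nil-clean if it is the sum of an idempotent and a nilpotent. -/
def IsNilClean {R : Type*} [Ring R] (a : R) : Prop :=
  ∃ e q : R, IsIdempotentElem e ∧ IsNilpotent q ∧ a = e + q

/-- A ring is GNC (generalized nil-clean) if every non-unit is nil-clean. -/
def IsGNC (R : Type*) [Ring R] : Prop :=
  ∀ a : R, ¬ IsUnit a → IsNilClean a

section aux

variable {R : Type*} [Ring R]

private lemma jac_mul_right {x : R} (y : R) (hx : x ∈ ((⊥ : Ideal R).jacobson)) :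
    x * y ∈ ((⊥ : Ideal R).jacobson) :=
  Ideal.mul_mem_right y _ hx

private lemma jac_pow_sub {a b : R} (h : a - b ∈ ((⊥ : Ideal R).jacobson)) (n : ℕ) :
    a ^ n - b ^ n ∈ ((⊥ : Ideal R).jacobson) := by
  induction n with
  | zero => simp
  | succ k ih =>
    have key : a ^ (k + 1) - b ^ (k + 1) = (a ^ k - b ^ k) * a + b ^ k * (a - b) := by
      rw [pow_succ, pow_succ]; noncomm_ring
    rw [key]
    exact Ideal.add_mem _ (jac_mul_right a ih) (Ideal.mul_mem_left _ _ h)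

private lemma jac_nilpotent (h : IsGNC R) {x : R} (hx : x ∈ ((⊥ : Ideal R).jacobson)) :
    IsNilpotent x := by
  by_cases hu : IsUnit x
  · -- a unit in the Jacobson radical forces the ring to be trivial
    obtain ⟨u, rfl⟩ := hu
    obtain ⟨z, hz⟩ := Ideal.mem_jacobson_iff.mp hx (-(↑u⁻¹ : R))
    rw [Ideal.mem_bot] at hz
    have h1 : z * -(↑u⁻¹ : R) * ↑u = -z := by
      rw [mul_assoc, neg_mul, Units.inv_mul, mul_neg, mul_one]
    rw [h1] at hz
    rw [neg_add_cancel, zero_sub, neg_eq_zero] at hz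
    have h0 : (1 : R) = 0 := hz
    exact ⟨1, by rw [pow_one, ← mul_one (u : R), h0, mul_zero]⟩
  · obtain ⟨e, q, he, ⟨n, hq⟩, hx_eq⟩ := h x hu
    -- e ≡ -q mod J, so e = e^(n+1) ≡ ±q^(n+1) = 0 mod J, hence e ∈ J
    have hsub : e - (-q) ∈ ((⊥ : Ideal R).jacobson) := by
      rw [sub_neg_eq_add, ← hx_eq]; exact hx
    have hpow := jac_pow_sub hsub (n + 1)
    have hqn : (-q) ^ (n + 1) = 0 := by
      rw [neg_pow, pow_succ q n, hq, zero_mul, mul_zero]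
    rw [he.pow_succ_eq, hqn, sub_zero] at hpow
    -- an idempotent in the Jacobson radical is zero
    obtain ⟨z, hz⟩ := Ideal.mem_jacobson_iff.mp hpow (-1 : R)
    rw [Ideal.mem_bot, sub_eq_zero] at hz
    -- hz : z * (-1) * e + z = 1
    have he0 : e = 0 := by
      rw [mul_neg_one, neg_mul] at hz
      have h2 := congrArg (· * e) hz
      simp only [add_mul, neg_mul, mul_assoc, he.eq, one_mul] at h2
      rwa [neg_add_cancel, eq_comm] at h2
    refine ⟨n, ?_⟩
    rw [hx_eq, he0, zero_add, hq]

end aux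

theorem gnc_nil_add_jacobson {R : Type*} [Ring R] (h : IsGNC R) :
    ∀ a b : R, IsNilpotent a → b ∈ ((⊥ : Ideal R).jacobson) → IsNilpotent (a + b) := by
  rintro a b ⟨m, hm⟩ hb
  have hsub : (a + b) - a ∈ ((⊥ : Ideal R).jacobson) := by
    simpa using hb
  have hmem := jac_pow_sub hsub m
  rw [hm, sub_zero] at hmem
  obtain ⟨k, hk⟩ := jac_nilpotent h hmem
  exact ⟨m * k, by rw [pow_mul, hk]⟩
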